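/- Let μ > λ > 0 and σ > 0. For b ∈ (λ, μ) define m_b := (μ−b)²/(2σ²), B₁(b) := ((b−λ+m_b) + √((b−λ+m_b)² + 4λm_b))/(2m_b), and B₂(b) := ((b−λ+m_b) − √((b−λ+m_b)² + 4λm_b))/(2m_b). Then, as b → μ⁻, B₁(b) → +∞ and B₂(b) → −λ/(μ−λ); consequently ((μ−b)/σ²)·B₂(b) → 0 as b → μ⁻. -/

import Mathlib

open Filter Topology

theorem stmt_19 (mu lam sigma : ℝ) (hmu : lam < mu) (hlam : 0 < lam) (hs : 0 < sigma)
    (mb B1 B2 : ℝ → ℝ)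
    (hmb : ∀ b, mb b = (mu - b)^2 / (2 * sigma^2))
    (hB1 : ∀ b, B1 b = ((b - lam + mb b) + Real.sqrt ((b - lam + mb b)^2 + 4*lam*(mb b)))
            / (2 * mb b))
    (hB2 : ∀ b, B2 b = ((b - lam + mb b) - Real.sqrt ((b - lam + mb b)^2 + 4*lam*(mb b)))
            / (2 * mb b)) :
    Tendsto B1 (𝓝[<] mu) atTop ∧
    Tendsto B2 (𝓝[<] mu) (𝓝 (-lam / (mu - lam))) ∧
    Tendsto (fun b => ((mu - b) / sigma^2) * B2 b) (𝓝[<] mu) (𝓝 0) := by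
  have hml : 0 < mu - lam := by linarith
  have hmbt : Tendsto mb (𝓝[<] mu) (𝓝 0) := by
    have hc : Continuous fun b : ℝ => (mu - b)^2 / (2*sigma^2) := by
      apply Continuous.div_const; continuity
    have h0 : Tendsto (fun b : ℝ => (mu - b)^2 / (2*sigma^2)) (𝓝 mu) (𝓝 0) := by
      have := hc.tendsto mu; simpa using this
    exact (h0.mono_left nhdsWithin_le_nhds).congr (fun b => (hmb b).symm)
  have hbt : Tendsto (fun b : ℝ => b) (𝓝[<] mu) (𝓝 mu) :=
    tendsto_id.mono_left nhdsWithin_le_nhds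
  have hAt : Tendsto (fun b => b - lam + mb b) (𝓝[<] mu) (𝓝 (mu - lam)) := by
    have := (hbt.sub_const lam).add hmbt
    simpa using this
  have hSt : Tendsto (fun b => Real.sqrt ((b - lam + mb b)^2 + 4*lam*(mb b)))
      (𝓝[<] mu) (𝓝 (mu - lam)) := by
    have h1 : Tendsto (fun b => (b - lam + mb b)^2 + 4*lam*(mb b)) (𝓝[<] mu)
        (𝓝 ((mu - lam)^2)) := by
      have := (hAt.pow 2).add (hmbt.const_mul (4*lam))
      simpa using this
    have := (Real.continuous_sqrt.tendsto ((mu-lam)^2)).comp h1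
    simpa [Function.comp_def, Real.sqrt_sq hml.le] using this
  have hDt : Tendsto (fun b => (b - lam + mb b) + Real.sqrt ((b - lam + mb b)^2 + 4*lam*(mb b)))
      (𝓝[<] mu) (𝓝 (2*(mu - lam))) := by
    simpa [two_mul] using hAt.add hSt
  have hev : ∀ᶠ b in 𝓝[<] mu, lam < b ∧ b < mu := by
    have h1 : Set.Ioo lam mu ∈ 𝓝[<] mu := Ioo_mem_nhdsLT_of_mem ⟨hmu, le_refl mu⟩
    filter_upwards [h1] with b hb using ⟨hb.1, hb.2⟩
  have hmpos : ∀ b, lam < b → b < mu → 0 < mb b := by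
    intro b _ hb2
    rw [hmb b]
    apply div_pos (pow_pos (by linarith) 2) (by positivity)
  -- B1
  have hB1t : Tendsto B1 (𝓝[<] mu) atTop := by
    have hinv : Tendsto (fun b => (2 * mb b)⁻¹) (𝓝[<] mu) atTop := by
      apply Filter.Tendsto.inv_tendsto_nhdsGT_zero
      rw [tendsto_nhdsWithin_iff]
      constructor
      · simpa using hmbt.const_mul 2
      · filter_upwards [hev] with b hb
        have := hmpos b hb.1 hb.2
        simp only [Set.mem_Ioi]
        linarith
    have := Filter.Tendsto.pos_mul_atTop (by linarith : (0:ℝ) < 2*(mu-lam)) hDt hinv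
    refine this.congr fun b => ?_
    rw [hB1 b, div_eq_mul_inv]
  -- B2
  have key : ∀ᶠ b in 𝓝[<] mu, (-(2*lam)) / ((b - lam + mb b)
      + Real.sqrt ((b - lam + mb b)^2 + 4*lam*(mb b))) = B2 b := by
    filter_upwards [hev] with b hb
    obtain ⟨hb1, hb2⟩ := hb
    have hm : 0 < mb b := hmpos b hb1 hb2
    have hA : 0 < b - lam + mb b := by linarith
    have hSnn : (0:ℝ) ≤ (b - lam + mb b)^2 + 4*lam*(mb b) := by positivity
    have hsq : Real.sqrt ((b - lam + mb b)^2 + 4*lam*(mb b)) ^ 2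
        = (b - lam + mb b)^2 + 4*lam*(mb b) := Real.sq_sqrt hSnn
    have hD : 0 < (b - lam + mb b) + Real.sqrt ((b - lam + mb b)^2 + 4*lam*(mb b)) := by
      have := Real.sqrt_nonneg ((b - lam + mb b)^2 + 4*lam*(mb b))
      linarith
    rw [hB2 b]
    rw [div_eq_div_iff hD.ne' (by linarith : (0:ℝ) < 2 * mb b).ne']
    nlinarith [hsq]
  have hlim : Tendsto (fun b => (-(2*lam)) / ((b - lam + mb b)
      + Real.sqrt ((b - lam + mb b)^2 + 4*lam*(mb b)))) (𝓝[<] mu)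
      (𝓝 (-lam / (mu - lam))) := by
    have := (tendsto_const_nhds (x := -(2*lam)) (f := 𝓝[<] mu)).div hDt
      (by linarith : (2:ℝ)*(mu-lam) ≠ 0)
    convert this using 2
    · rfl
    rw [← mul_neg, mul_div_mul_left _ _ two_ne_zero]
  have hB2t : Tendsto B2 (𝓝[<] mu) (𝓝 (-lam / (mu - lam))) := hlim.congr' key
  refine ⟨hB1t, hB2t, ?_⟩
  -- product
  have h3 : Tendsto (fun b => (mu - b)/sigma^2) (𝓝[<] mu) (𝓝 0) := by
    have hc : Continuous fun b : ℝ => (mu - b)/sigma^2 := by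
      apply Continuous.div_const; continuity
    have := hc.tendsto mu
    simp only [sub_self, zero_div] at this
    exact this.mono_left nhdsWithin_le_nhds
  have := h3.mul hB2t
  simpa using this
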